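/- Let G be a set of T+1 vectors in F_2^T whose span has dimension T. Then there exist T vectors a_1, …, a_T in F_2^T such that every vector of G is a sum of at most 2 of the a_i. -/

import Mathlib

/-- Circuit lemma: a set of `T+1` vectors of `F₂^T` whose span has dimension `T` can be
covered by `T` vectors so that every member is a sum of at most `2` of them. -/
theorem stmt8 (T : ℕ) (hT : 1 ≤ T) (G : Finset (Fin T → ZMod 2))
    (hcard : G.card = T + 1)
    (hrank : Module.finrank (ZMod 2) (Submodule.span (ZMod 2) (G : Set (Fin T → ZMod 2))) = T) :
    ∃ a : Fin T → Fin T → ZMod 2,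
      ∀ v ∈ G, ∃ S : Finset (Fin T), S.card ≤ 2 ∧ v = ∑ i ∈ S, a i := by
  classical
  -- the span is everything
  have hspan : Submodule.span (ZMod 2) (G : Set (Fin T → ZMod 2)) = ⊤ :=
    Submodule.eq_top_of_finrank_eq (by rw [hrank, Module.finrank_fin_fun])
  -- extract a basis from G
  obtain ⟨bs, hbsub, hbspan, hbind⟩ :=
    exists_linearIndependent (ZMod 2) (G : Set (Fin T → ZMod 2))
  haveI : Fintype bs := (G.finite_toSet.subset hbsub).fintype
  have hbtop : Submodule.span (ZMod 2) bs = ⊤ := by rw [hbspan, hspan]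
  let β : Module.Basis bs (ZMod 2) (Fin T → ZMod 2) :=
    Module.Basis.mk hbind (by rw [Subtype.range_coe]; exact hbtop.ge)
  have hcardbs : Fintype.card bs = T := by
    rw [← Module.finrank_eq_card_basis β, Module.finrank_fin_fun]
  -- B : the basis as a finset
  set B : Finset (Fin T → ZMod 2) := bs.toFinset with hBdef
  have hBG : B ⊆ G := by intro x hx; exact_mod_cast hbsub (by simpa [hBdef] using hx)
  have hBcard : B.card = T := by rw [hBdef, Set.toFinset_card, hcardbs]
  -- the extra vector w
  have hlt : B.card < G.card := by omega
  have hexw : ∃ w ∈ G, w ∉ B := by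
    by_contra h
    push_neg at h
    exact absurd (Finset.card_le_card h) (not_le.mpr hlt)
  obtain ⟨w, hwG, hwB⟩ := hexw
  -- G = B ∪ {w}
  have hGsplit : ∀ v ∈ G, v ∈ B ∨ v = w := by
    intro v hvG
    by_contra h
    push_neg at h
    obtain ⟨hvB, hvw⟩ := h
    have hsub : insert v (insert w B) ⊆ G := by
      intro x hx
      simp only [Finset.mem_insert] at hx
      rcases hx with rfl | rfl | hx
      · exact hvG
      · exact hwG
      · exact hBG hx
    have h1 : (insert v (insert w B)).card = T + 2 := by
      rw [Finset.card_insert_of_notMem (by simp [hvB, hvw]),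
        Finset.card_insert_of_notMem hwB, hBcard]
    have := Finset.card_le_card hsub
    omega
  -- express w as a sum of a subset S of B
  have hw2 : ∀ x : ZMod 2, x ≠ 0 → x = 1 := by decide
  have hrepr : w = ∑ i : bs, β.repr w i • (i : Fin T → ZMod 2) := by
    conv_lhs => rw [← β.sum_repr w]
    refine Finset.sum_congr rfl fun i _ => ?_
    rw [Module.Basis.coe_mk]
  set S : Finset (Fin T → ZMod 2) :=
    (Finset.univ.filter (fun i : bs => β.repr w i ≠ 0)).image Subtype.val with hSdef
  have hSsum : w = ∑ v ∈ S, v := by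
    rw [hSdef, Finset.sum_image (by intro a _ b _ h; exact Subtype.ext h)]
    have hcongr : ∀ i ∈ Finset.univ.filter (fun i : bs => β.repr w i ≠ 0),
        (i : Fin T → ZMod 2) = β.repr w i • (i : Fin T → ZMod 2) := fun i hi => by
      rw [hw2 _ (Finset.mem_filter.mp hi).2, one_smul]
    rw [Finset.sum_congr rfl hcongr]
    exact hrepr.trans (Finset.sum_filter_of_ne
      (f := fun i : bs => β.repr w i • (i : Fin T → ZMod 2))
      (p := fun i : bs => β.repr w i ≠ 0)
      (fun x _ hx h0 => hx (show β.repr w x • (x : Fin T → ZMod 2) = 0 by rw [h0, zero_smul]))).symm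
  have hSB : S ⊆ B := by
    intro x hx
    rw [hSdef] at hx
    obtain ⟨i, _, rfl⟩ := Finset.mem_image.mp hx
    simp [hBdef, i.2]
  -- the list: S first, then B \ S
  set l : List (Fin T → ZMod 2) := S.toList ++ (B \ S).toList with hldef
  have hSBcard : S.card ≤ B.card := Finset.card_le_card hSB
  have hllen : l.length = T := by
    rw [hldef, List.length_append, Finset.length_toList, Finset.length_toList,
      Finset.card_sdiff_of_subset hSB, hBcard]
    omega
  have hmeml : ∀ v ∈ B, v ∈ l := by
    intro v hv
    rw [hldef, List.mem_append, Finset.mem_toList, Finset.mem_toList, Finset.mem_sdiff]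
    by_cases h : v ∈ S
    · exact Or.inl h
    · exact Or.inr ⟨hv, h⟩
  -- the prefix sums
  set a : Fin T → Fin T → ZMod 2 := fun i => (l.take (i.1 + 1)).sum with hadef
  have hsum_toList : ∀ (s : Finset (Fin T → ZMod 2)), s.toList.sum = ∑ v ∈ s, v := by
    intro s
    rw [Finset.sum, ← Multiset.sum_toList, Finset.toList]
    simp
  -- char 2 cancellation
  have hchar : ∀ x y : Fin T → ZMod 2, x + (x + y) = y := by
    intro x y
    funext j
    have h2 : ∀ u v : ZMod 2, u + (u + v) = v := by decide
    simp [h2]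
  refine ⟨a, fun v hvG => ?_⟩
  rcases hGsplit v hvG with hvB | rfl
  · -- v is a basis vector: v = l[i], v = a i - a (i-1)
    obtain ⟨i, hi, hget⟩ := List.mem_iff_getElem.mp (hmeml v hvB)
    have hiT : i < T := by omega
    have hstep : (l.take (i + 1)).sum = (l.take i).sum + v := by
      rw [List.sum_take_succ l i hi, hget]
    rcases Nat.eq_zero_or_pos i with h0 | h0
    · refine ⟨{⟨i, hiT⟩}, by simp, ?_⟩
      rw [Finset.sum_singleton]
      simp only [hadef]
      rw [hstep, h0]
      simp
    · have hi1T : i - 1 < T := by omega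
      have hne : (⟨i - 1, hi1T⟩ : Fin T) ≠ ⟨i, hiT⟩ := by
        intro h
        rw [Fin.mk.injEq] at h
        omega
      refine ⟨{⟨i - 1, hi1T⟩, ⟨i, hiT⟩},
        le_trans (Finset.card_insert_le _ _) (by simp), ?_⟩
      rw [Finset.sum_pair hne]
      simp only [hadef]
      have hieq : i - 1 + 1 = i := by omega
      rw [hieq, hstep]
      exact (hchar _ _).symm
  · -- v = w : sum of the prefix of length S.card
    rcases Nat.eq_zero_or_pos S.card with h0 | h0
    · refine ⟨∅, by simp, ?_⟩
      rw [Finset.sum_empty, hSsum, Finset.card_eq_zero.mp h0, Finset.sum_empty]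
    · have hkT : S.card - 1 < T := by omega
      refine ⟨{⟨S.card - 1, hkT⟩}, by simp, ?_⟩
      rw [Finset.sum_singleton]
      simp only [hadef]
      have hieq : S.card - 1 + 1 = S.card := by omega
      rw [hieq, hldef, ← Finset.length_toList S, List.take_left, hsum_toList]
      exact hSsum
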